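/- arXiv:1306.1841 — 2 statements merged into one kernel-verified Lean document; each statement's English description precedes it below -/
import Mathlib

section
/- For every integer n ≥ 2 there exists a constant C₀ > 0 depending only on n with the following property: for every finite nonnegative Borel measure ν on ℝⁿ with β := ν(ℝⁿ), every p₀ ∈ ℝⁿ, and every ε > 0, the set { x ∈ B(p₀,10) : (1/c_n) ∫_{B(p₀,10)} | log(1/|x−y|) | dν(y) > C₀ β / ε } has one-dimensional Hausdorff content strictly less than 10 ε. -/
open MeasureTheory Metric Set
open scoped ENNReal

/-- `c_n := 2^{n-2} Γ(n/2) π^{n/2}`. -/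
noncomputable def cN (n : ℕ) : ℝ :=
  (2 : ℝ) ^ ((n : ℝ) - 2) * Real.Gamma ((n : ℝ) / 2) * Real.pi ^ ((n : ℝ) / 2)

/-- Logarithmic potential `u(x) = (1/c_n) ∫ log(|y|/|x-y|) f(y) dy`. -/
noncomputable def logPot (n : ℕ) (f : EuclideanSpace ℝ (Fin n) → ℝ)
    (x : EuclideanSpace ℝ (Fin n)) : ℝ :=
  (1 / cN n) * ∫ y, Real.log (‖y‖ / ‖x - y‖) * f y

/-- `ω` is an `A_p` weight with constant `K` (for `p > 1`):
for every ball `B`, `(⨍_B ω) · (⨍_B ω^{-1/(p-1)})^{p-1} ≤ K`. -/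
def IsApWeight (n : ℕ) (p K : ℝ) (ω : EuclideanSpace ℝ (Fin n) → ℝ) : Prop :=
  ∀ (x : EuclideanSpace ℝ (Fin n)) (r : ℝ), 0 < r →
    ((volume (ball x r)).toReal⁻¹ * ∫ y in ball x r, ω y) *
      ((volume (ball x r)).toReal⁻¹ *
        ∫ y in ball x r, (ω y) ^ (-(1 / (p - 1)) : ℝ)) ^ (p - 1) ≤ K

/-- `δ_ω(x,y) = (∫_{B_{xy}} ω)^{1/n}`, where `B_{xy}` is the closed ball with
center `(x+y)/2` and radius `|x-y|/2`. -/
noncomputable def deltaW (n : ℕ) (ω : EuclideanSpace ℝ (Fin n) → ℝ)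
    (x y : EuclideanSpace ℝ (Fin n)) : ℝ :=
  (∫ z in closedBall (midpoint ℝ x y) (dist x y / 2), ω z) ^ ((1 : ℝ) / n)

/-- `d_ω(x,y)`: infimum of `∫₀^L ω(γ(t))^{1/n} dt` over all `L ≥ 0` and all
1-Lipschitz curves `γ : [0,L] → ℝⁿ` joining `x` to `y` inside `B_{xy}`. -/
noncomputable def dW (n : ℕ) (ω : EuclideanSpace ℝ (Fin n) → ℝ)
    (x y : EuclideanSpace ℝ (Fin n)) : ℝ :=
  sInf {d : ℝ | ∃ (L : ℝ) (γ : ℝ → EuclideanSpace ℝ (Fin n)),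
    0 ≤ L ∧ LipschitzOnWith 1 γ (Set.Icc 0 L) ∧ γ 0 = x ∧ γ L = y ∧
    (∀ t ∈ Set.Icc 0 L, γ t ∈ closedBall (midpoint ℝ x y) (dist x y / 2)) ∧
    d = ∫ t in (0 : ℝ)..L, (ω (γ t)) ^ ((1 : ℝ) / n)}

/-- One-dimensional Hausdorff content: infimum of `Σᵢ diam Bᵢ` over countable
covers of `E` by balls `Bᵢ`. -/
noncomputable def H1content {n : ℕ} (E : Set (EuclideanSpace ℝ (Fin n))) : ℝ≥0∞ :=
  ⨅ (c : ℕ → EuclideanSpace ℝ (Fin n) × ℝ) (_ : E ⊆ ⋃ i, ball (c i).1 (c i).2),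
    ∑' i, ENNReal.ofReal (2 * (c i).2)


lemma nat_le_geom (k : ℕ) : (k + 1 : ℝ) ≤ 2 * (3/2)^k := by
  induction k with
  | zero => norm_num
  | succ k ih =>
    have h1 : (1:ℝ) ≤ (3/2)^k := one_le_pow₀ (by norm_num)
    push_cast
    push_cast at ih
    rw [pow_succ]
    nlinarith

lemma annulus_exists {d : ℝ} (h0 : 0 < d) (h1 : d < 1) :
    ∃ k : ℕ, (1/2 : ℝ)^(k+1) < d ∧ d ≤ (1/2)^k := by
  have hex : ∃ m : ℕ, (1/2 : ℝ)^m < d := exists_pow_lt_of_lt_one h0 (by norm_num)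
  classical
  set N := Nat.find hex with hN
  have hNs : (1/2 : ℝ)^N < d := Nat.find_spec hex
  have hNpos : N ≠ 0 := by
    intro h
    rw [h] at hNs; simp at hNs; linarith
  obtain ⟨k, hk⟩ := Nat.exists_eq_succ_of_ne_zero hNpos
  rw [hk] at hNs
  refine ⟨k, hNs, ?_⟩
  have := Nat.find_min hex (m := k) (by omega)
  linarith [not_lt.mp this]

lemma tsum_bound (lam : ℝ) (hlam : 0 ≤ lam) :
    ∑' k : ℕ, ENNReal.ofReal ((k + 1 : ℝ) * lam * (1/2)^k) ≤ ENNReal.ofReal (8 * lam) := by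
  have hsum : Summable (fun k : ℕ => 2 * lam * (3/4 : ℝ)^k) :=
    (summable_geometric_of_lt_one (by norm_num) (by norm_num)).mul_left _
  calc ∑' k : ℕ, ENNReal.ofReal ((k + 1 : ℝ) * lam * (1/2)^k)
      ≤ ∑' k : ℕ, ENNReal.ofReal (2 * lam * (3/4 : ℝ)^k) := by
        refine ENNReal.tsum_le_tsum fun k => ENNReal.ofReal_le_ofReal ?_
        have h := nat_le_geom k
        have h2 : ((3:ℝ)/2)^k * (1/2)^k = (3/4)^k := by
          rw [← mul_pow]; norm_num
        have hp : (0:ℝ) ≤ (1/2:ℝ)^k := by positivity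
        calc (k + 1 : ℝ) * lam * (1/2)^k ≤ (2 * (3/2)^k) * lam * (1/2)^k := by
              have := mul_le_mul_of_nonneg_right (mul_le_mul_of_nonneg_right h hlam) hp
              linarith
          _ = 2 * lam * (3/4)^k := by rw [← h2]; ring
    _ = ENNReal.ofReal (∑' k : ℕ, 2 * lam * (3/4 : ℝ)^k) := by
        rw [ENNReal.ofReal_tsum_of_nonneg (fun k => by positivity) hsum]
    _ ≤ ENNReal.ofReal (8 * lam) := by
        rw [tsum_mul_left, tsum_geometric_of_lt_one (by norm_num) (by norm_num)]
        apply ENNReal.ofReal_le_ofReal; linarith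

variable {n : ℕ}

lemma good_bound (ν : Measure (EuclideanSpace ℝ (Fin n))) [IsFiniteMeasure ν]
    (p₀ x : EuclideanSpace ℝ (Fin n)) (hx : x ∈ ball p₀ 10) (lam : ℝ) (hlam : 0 ≤ lam)
    (h : ∀ r : ℝ, 0 < r → r ≤ 1 → ν (closedBall x r) ≤ ENNReal.ofReal (lam * r)) :
    ∫⁻ y in ball p₀ 10, ENNReal.ofReal |Real.log (1 / ‖x - y‖)| ∂ν ≤
      ENNReal.ofReal (19 * (ν Set.univ).toReal + 8 * lam) := by
  set S := ball p₀ 10 with hS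
  set g : EuclideanSpace ℝ (Fin n) → ℝ≥0∞ :=
    fun y => ENNReal.ofReal |Real.log (1 / ‖x - y‖)| with hg
  set s : ℕ → Set (EuclideanSpace ℝ (Fin n)) := fun i =>
    Nat.rec {y | dist x y = 0 ∨ 1 ≤ dist x y}
      (fun k _ => {y | dist x y ∈ Set.Ioc ((1/2 : ℝ)^(k+1)) ((1/2)^k)}) i with hs
  have hs0 : s 0 = {y | dist x y = 0 ∨ 1 ≤ dist x y} := rfl
  have hsk : ∀ k, s (k+1) = {y | dist x y ∈ Set.Ioc ((1/2 : ℝ)^(k+1)) ((1/2)^k)} := fun k => rfl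
  have hcover : S ⊆ ⋃ i, s i := by
    intro y _
    rcases eq_or_lt_of_le (dist_nonneg (x := x) (y := y)) with hd | hd
    · exact mem_iUnion.2 ⟨0, Or.inl hd.symm⟩
    rcases le_or_gt 1 (dist x y) with hd1 | hd1
    · exact mem_iUnion.2 ⟨0, Or.inr hd1⟩
    · obtain ⟨k, hk1, hk2⟩ := annulus_exists hd hd1
      exact mem_iUnion.2 ⟨k + 1, ⟨hk1, hk2⟩⟩
  have hSeq : S = ⋃ i, S ∩ s i := by
    rw [← Set.inter_iUnion]
    exact (Set.inter_eq_left.2 hcover).symm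
  have hβ : ν Set.univ = ENNReal.ofReal ((ν Set.univ).toReal) :=
    (ENNReal.ofReal_toReal (measure_ne_top ν _)).symm
  calc ∫⁻ y in S, g y ∂ν = ∫⁻ y in ⋃ i, S ∩ s i, g y ∂ν := by rw [← hSeq]
    _ ≤ ∑' i, ∫⁻ y in S ∩ s i, g y ∂ν := lintegral_iUnion_le _ _
    _ = (∫⁻ y in S ∩ s 0, g y ∂ν) + ∑' k, ∫⁻ y in S ∩ s (k+1), g y ∂ν :=
        tsum_eq_zero_add' ENNReal.summable
    _ ≤ ENNReal.ofReal (19 * (ν Set.univ).toReal) + ENNReal.ofReal (8 * lam) := by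
        gcongr
        · -- far/zero part
          calc ∫⁻ y in S ∩ s 0, g y ∂ν ≤ ∫⁻ _ in S ∩ s 0, ENNReal.ofReal 19 ∂ν := by
                refine setLIntegral_mono measurable_const ?_
                rintro y ⟨hyS, hy0⟩
                rcases hy0 with hy0 | hy0
                · have : ‖x - y‖ = 0 := by rw [← dist_eq_norm]; exact hy0
                  simp [hg, this]
                · have hd20 : dist x y < 20 := by
                    have h1 : dist x p₀ < 10 := mem_ball.1 hx
                    have h2 : dist p₀ y < 10 := by
                      have := mem_ball.1 hyS; rw [dist_comm]; exact this
                    calc dist x y ≤ dist x p₀ + dist p₀ y := dist_triangle _ _ _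
                      _ < 20 := by linarith
                  have hdn : dist x y = ‖x - y‖ := dist_eq_norm _ _
                  have hpos : (0:ℝ) < ‖x - y‖ := by rw [← hdn]; linarith
                  have hle : (1 : ℝ) / ‖x - y‖ ≤ 1 := by
                    rw [div_le_one hpos, ← hdn]; exact hy0
                  have hlpos : 0 < (1:ℝ) / ‖x - y‖ := by positivity
                  have hlognp : Real.log (1 / ‖x - y‖) ≤ 0 := Real.log_nonpos (le_of_lt hlpos) hle
                  apply ENNReal.ofReal_le_ofReal
                  rw [abs_of_nonpos hlognp, one_div, Real.log_inv, neg_neg]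
                  calc Real.log ‖x - y‖ ≤ ‖x - y‖ - 1 := Real.log_le_sub_one_of_pos hpos
                    _ ≤ 19 := by rw [← hdn]; linarith
            _ = ENNReal.ofReal 19 * ν (S ∩ s 0) := setLIntegral_const _ _
            _ ≤ ENNReal.ofReal 19 * ν Set.univ := by gcongr; exact le_top.trans_eq (by simp)
            _ = ENNReal.ofReal (19 * (ν Set.univ).toReal) := by
                conv_lhs => rw [hβ]
                rw [← ENNReal.ofReal_mul (by norm_num)]
        · -- annuli
          calc ∑' k, ∫⁻ y in S ∩ s (k+1), g y ∂ν
              ≤ ∑' k : ℕ, ENNReal.ofReal ((k + 1 : ℝ) * lam * (1/2)^k) := by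
                refine ENNReal.tsum_le_tsum fun k => ?_
                have hbound : ∀ y ∈ S ∩ s (k+1), g y ≤ ENNReal.ofReal (k+1 : ℝ) := by
                  rintro y ⟨hyS, hy⟩
                  obtain ⟨hy1, hy2⟩ := hy
                  have hdn : dist x y = ‖x - y‖ := dist_eq_norm _ _
                  have hpos : (0:ℝ) < ‖x - y‖ := by
                    rw [← hdn]; exact lt_trans (by positivity) hy1
                  apply ENNReal.ofReal_le_ofReal
                  have hlog : Real.log (1 / ‖x - y‖) ≤ (k+1 : ℝ) * Real.log 2 := by
                    rw [one_div, Real.log_inv]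
                    have : Real.log ((1/2 : ℝ)^(k+1)) ≤ Real.log ‖x - y‖ := by
                      apply Real.log_le_log (by positivity)
                      rw [← hdn]; exact le_of_lt hy1
                    rw [Real.log_pow] at this
                    have h2 : Real.log (1/2 : ℝ) = - Real.log 2 := by
                      rw [one_div, Real.log_inv]
                    rw [h2] at this
                    push_cast at this ⊢
                    linarith
                  have hlog2 : Real.log 2 ≤ 1 := by
                    have := Real.log_le_sub_one_of_pos (x := 2) (by norm_num); linarith
                  have habs : |Real.log (1 / ‖x - y‖)| = Real.log (1 / ‖x - y‖) := by
                    apply abs_of_nonneg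
                    apply Real.log_nonneg
                    rw [le_div_iff₀ hpos, one_mul, ← hdn]
                    calc dist x y ≤ (1/2 : ℝ)^k := hy2
                      _ ≤ 1 := by
                        apply pow_le_one₀ <;> norm_num
                  rw [habs]
                  have hk1 : (0:ℝ) ≤ (k+1:ℝ) := by positivity
                  nlinarith
                calc ∫⁻ y in S ∩ s (k+1), g y ∂ν
                    ≤ ∫⁻ _ in S ∩ s (k+1), ENNReal.ofReal (k+1:ℝ) ∂ν :=
                      setLIntegral_mono measurable_const hbound
                  _ = ENNReal.ofReal (k+1:ℝ) * ν (S ∩ s (k+1)) := setLIntegral_const _ _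
                  _ ≤ ENNReal.ofReal (k+1:ℝ) * ENNReal.ofReal (lam * (1/2)^k) := by
                      gcongr
                      refine le_trans (measure_mono ?_) (h ((1/2)^k) (by positivity)
                        (by apply pow_le_one₀ <;> norm_num))
                      rintro y ⟨_, hy⟩
                      exact mem_closedBall.2 (by rw [dist_comm]; exact hy.2)
                  _ = ENNReal.ofReal ((k + 1 : ℝ) * lam * (1/2)^k) := by
                      rw [← ENNReal.ofReal_mul (by positivity)]; ring_nf
            _ ≤ ENNReal.ofReal (8 * lam) := tsum_bound lam hlam
    _ = ENNReal.ofReal (19 * (ν Set.univ).toReal + 8 * lam) := by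
        rw [ENNReal.ofReal_add (by positivity) (by positivity)]

lemma H1content_le {n : ℕ} {E : Set (EuclideanSpace ℝ (Fin n))}
    (c : ℕ → EuclideanSpace ℝ (Fin n) × ℝ) (h : E ⊆ ⋃ i, ball (c i).1 (c i).2) :
    H1content E ≤ ∑' i, ENNReal.ofReal (2 * (c i).2) :=
  iInf₂_le c h


/-- There is `C₀ = C₀(n) > 0` such that for every finite
nonnegative Borel measure `ν` with total mass `β`, every `p₀` and every `ε > 0`,
the set of `x ∈ B(p₀,10)` where `(1/c_n) ∫_{B(p₀,10)} |log(1/|x-y|)| dν(y) > C₀ β/ε`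
has one-dimensional Hausdorff content `< 10 ε`. -/
theorem content_of_singular_set_lt
    (n : ℕ) (hn : 2 ≤ n) :
    ∃ C₀ : ℝ, 0 < C₀ ∧
      ∀ (ν : Measure (EuclideanSpace ℝ (Fin n))), IsFiniteMeasure ν →
        ∀ (p₀ : EuclideanSpace ℝ (Fin n)) (ε : ℝ), 0 < ε →
          H1content {x : EuclideanSpace ℝ (Fin n) | x ∈ ball p₀ 10 ∧
              ENNReal.ofReal (C₀ * (ν Set.univ).toReal / ε) <
                ENNReal.ofReal (1 / cN n) *
                  ∫⁻ y in ball p₀ 10, ENNReal.ofReal |Real.log (1 / ‖x - y‖)| ∂ν} <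
            ENNReal.ofReal (10 * ε) := by
  classical
  have hnpos : (0:ℝ) < (n:ℝ) / 2 := by
    have : (0:ℝ) < (n:ℝ) := by exact_mod_cast Nat.lt_of_lt_of_le (by norm_num) hn
    linarith
  have hΓ : 0 < Real.Gamma ((n : ℝ) / 2) := Real.Gamma_pos_of_pos hnpos
  have hπ : 0 < Real.pi := Real.pi_pos
  have hc : 0 < cN n := by
    unfold cN
    positivity
  refine ⟨100 / cN n, by positivity, ?_⟩
  intro ν hν p₀ ε hε
  set β := (ν Set.univ).toReal with hβdef
  have hβ0 : 0 ≤ β := ENNReal.toReal_nonneg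
  set E := {x : EuclideanSpace ℝ (Fin n) | x ∈ ball p₀ 10 ∧
      ENNReal.ofReal (100 / cN n * (ν Set.univ).toReal / ε) <
        ENNReal.ofReal (1 / cN n) *
          ∫⁻ y in ball p₀ 10, ENNReal.ofReal |Real.log (1 / ‖x - y‖)| ∂ν} with hE
  show H1content E < ENNReal.ofReal (10 * ε)
  by_cases hε2 : 2 < ε
  · -- trivial cover by one ball
    set c : ℕ → EuclideanSpace ℝ (Fin n) × ℝ := fun i => if i = 0 then (p₀, 10) else (p₀, 0)
      with hcdef
    have hcov : E ⊆ ⋃ i, ball (c i).1 (c i).2 := by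
      intro x hx
      refine mem_iUnion.2 ⟨0, ?_⟩
      simpa [c] using hx.1
    refine lt_of_le_of_lt (H1content_le c hcov) ?_
    have hsum : ∑' i, ENNReal.ofReal (2 * (c i).2) = ENNReal.ofReal 20 := by
      rw [tsum_eq_single 0 (fun b hb => by simp [c, hb])]
      simp [c]; norm_num
    rw [hsum]
    exact (ENNReal.ofReal_lt_ofReal_iff (by linarith)).mpr (by linarith)
  push_neg at hε2
  by_cases hβz : ν Set.univ = 0
  · -- zero measure: the set is empty
    have hν0 : ν = 0 := Measure.measure_univ_eq_zero.mp hβz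
    have hEempty : E = ∅ := by
      rw [hE]
      ext x
      simp only [mem_setOf_eq, mem_empty_iff_false, iff_false, not_and]
      intro _
      rw [hν0]
      simp
    set c : ℕ → EuclideanSpace ℝ (Fin n) × ℝ := fun _ => (p₀, 0) with hcdef
    have hcov : E ⊆ ⋃ i, ball (c i).1 (c i).2 := by rw [hEempty]; exact empty_subset _
    refine lt_of_le_of_lt (H1content_le c hcov) ?_
    have hz : ∑' (i:ℕ), ENNReal.ofReal (2 * (c i).2) = 0 := by simp [c]
    rw [hz]
    exact ENNReal.ofReal_pos.mpr (by linarith)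
  -- main case
  have hβpos : 0 < β := ENNReal.toReal_pos hβz (measure_ne_top ν _)
  set lam : ℝ := 2 * β / ε with hlamdef
  have hlam : 0 < lam := by positivity
  -- every point of E has a heavy ball
  have hheavy : ∀ x ∈ E, ∃ ρ : ℝ, 0 < ρ ∧ ρ ≤ 1 ∧
      ENNReal.ofReal (lam * ρ) < ν (closedBall x ρ) := by
    intro x hx
    rw [hE] at hx
    obtain ⟨hx1, hx2⟩ := hx
    by_contra hcon
    push_neg at hcon
    have hcon' : ∀ ρ : ℝ, 0 < ρ → ρ ≤ 1 → ν (closedBall x ρ) ≤ ENNReal.ofReal (lam * ρ) := by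
      intro ρ h1 h2
      exact hcon ρ h1 h2
    have hb := good_bound ν p₀ x hx1 lam hlam.le hcon'
    have hkey : 19 * β + 8 * lam ≤ 100 * β / ε := by
      rw [hlamdef, le_div_iff₀ hε]
      have h8 : 8 * (2 * β / ε) * ε = 16 * β := by field_simp; ring
      nlinarith [h8, mul_nonneg hβ0 (by linarith : (0:ℝ) ≤ 2 - ε)]
    have hcontra : ENNReal.ofReal (1 / cN n) *
        (∫⁻ y in ball p₀ 10, ENNReal.ofReal |Real.log (1 / ‖x - y‖)| ∂ν) ≤
        ENNReal.ofReal (100 / cN n * (ν Set.univ).toReal / ε) := by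
      calc ENNReal.ofReal (1 / cN n) *
          (∫⁻ y in ball p₀ 10, ENNReal.ofReal |Real.log (1 / ‖x - y‖)| ∂ν)
          ≤ ENNReal.ofReal (1 / cN n) * ENNReal.ofReal (19 * β + 8 * lam) := by gcongr
        _ = ENNReal.ofReal ((1 / cN n) * (19 * β + 8 * lam)) :=
            (ENNReal.ofReal_mul (by positivity)).symm
        _ ≤ ENNReal.ofReal (100 / cN n * β / ε) := by
            apply ENNReal.ofReal_le_ofReal
            have h1 : (0:ℝ) < 1 / cN n := by positivity
            have : (1 / cN n) * (19 * β + 8 * lam) ≤ (1 / cN n) * (100 * β / ε) :=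
              mul_le_mul_of_nonneg_left hkey h1.le
            calc (1 / cN n) * (19 * β + 8 * lam) ≤ (1 / cN n) * (100 * β / ε) := this
              _ = 100 / cN n * β / ε := by ring
    exact absurd hx2 (not_lt.2 hcontra)
  choose! ρ h1 h2 h3 using hheavy
  obtain ⟨u, huE, hdisj, hcov⟩ :=
    Vitali.exists_disjoint_subfamily_covering_enlargement_closedBall E id ρ 1
      (fun a ha => h2 a ha) 4 (by norm_num)
  have hcnt : u.Countable := by
    have hdisj' : Pairwise (Function.onFun Disjoint fun b : u => closedBall (b : EuclideanSpace ℝ (Fin n)) (ρ b)) := by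
      intro i j hij
      exact hdisj i.2 j.2 (fun h => hij (Subtype.ext h))
    have hcount := MeasureTheory.Measure.countable_meas_pos_of_disjoint_iUnion
      (μ := ν) (As := fun b : u => closedBall (b : EuclideanSpace ℝ (Fin n)) (ρ b))
      (fun b => measurableSet_closedBall) hdisj'
    have hpos : {b : u | 0 < ν (closedBall (b : EuclideanSpace ℝ (Fin n)) (ρ b))} = Set.univ := by
      ext b
      simp only [mem_setOf_eq, mem_univ, iff_true]
      exact lt_of_le_of_lt zero_le (h3 b.1 (huE b.2))
    rw [hpos] at hcount
    exact Set.countable_coe_iff.mp (Set.countable_univ_iff.mp hcount)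
  haveI henc : Encodable ↥u := hcnt.toEncodable
  set c : ℕ → EuclideanSpace ℝ (Fin n) × ℝ := fun i =>
    (Encodable.decode₂ ↥u i).elim (p₀, 0)
      (fun b => ((b : EuclideanSpace ℝ (Fin n)), 5 * ρ b)) with hcdef
  set D : ℕ → Set (EuclideanSpace ℝ (Fin n)) := fun i =>
    (Encodable.decode₂ ↥u i).elim ∅
      (fun b => closedBall (b : EuclideanSpace ℝ (Fin n)) (ρ b)) with hDdef
  have hcov' : E ⊆ ⋃ i, ball (c i).1 (c i).2 := by
    intro x hx
    obtain ⟨b, hbu, hsub⟩ := hcov x hx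
    have hrb : 0 < ρ b := h1 b (huE hbu)
    have hxb : x ∈ closedBall b (4 * ρ b) := hsub (mem_closedBall_self (h1 x hx).le)
    refine mem_iUnion.2 ⟨Encodable.encode (⟨b, hbu⟩ : u), ?_⟩
    have hdec : Encodable.decode₂ ↥u (Encodable.encode (⟨b, hbu⟩ : u)) = some ⟨b, hbu⟩ :=
      Encodable.decode₂_encode _
    simp only [hcdef, hdec, Option.elim]
    have hd := mem_closedBall.1 hxb
    exact mem_ball.2 (lt_of_le_of_lt hd (by linarith))
  have hDm : ∀ i, MeasurableSet (D i) := by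
    intro i
    simp only [hDdef]
    cases hi : Encodable.decode₂ ↥u i with
    | none => simp
    | some b => simpa using measurableSet_closedBall
  have hDd : Pairwise (Function.onFun Disjoint D) := by
    intro i j hij
    simp only [Function.onFun, hDdef]
    cases hi : Encodable.decode₂ ↥u i with
    | none => simp
    | some b =>
      cases hj : Encodable.decode₂ ↥u j with
      | none => simp
      | some b' =>
        simp only [Option.elim]
        have hbb : (b : EuclideanSpace ℝ (Fin n)) ≠ (b' : EuclideanSpace ℝ (Fin n)) := by
          intro h
          have hbe : b = b' := Subtype.ext h
          rw [hbe] at hi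
          have e1 : Encodable.encode b' = i := (Encodable.mem_decode₂).1 (Option.mem_def.2 hi)
          have e2 : Encodable.encode b' = j := (Encodable.mem_decode₂).1 (Option.mem_def.2 hj)
          exact hij (e1 ▸ e2)
        exact hdisj b.2 b'.2 hbb
  have hterm : ∀ i, ENNReal.ofReal (2 * (c i).2) ≤ ENNReal.ofReal (10 / lam) * ν (D i) := by
    intro i
    simp only [hcdef, hDdef]
    cases hi : Encodable.decode₂ ↥u i with
    | none => simp
    | some b =>
      simp only [Option.elim]
      have hb3 := h3 b.1 (huE b.2)
      have hrb : 0 < ρ b := h1 b.1 (huE b.2)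
      calc ENNReal.ofReal (2 * (5 * ρ (b : EuclideanSpace ℝ (Fin n))))
          = ENNReal.ofReal (10 / lam) * ENNReal.ofReal (lam * ρ (b : EuclideanSpace ℝ (Fin n))) := by
            rw [← ENNReal.ofReal_mul (by positivity)]
            congr 1
            field_simp
            ring
        _ ≤ ENNReal.ofReal (10 / lam) * ν (closedBall (b : EuclideanSpace ℝ (Fin n)) (ρ b)) := by
            exact mul_le_mul_right hb3.le _
  refine lt_of_le_of_lt (H1content_le c hcov') ?_
  calc ∑' i, ENNReal.ofReal (2 * (c i).2) ≤ ∑' i, ENNReal.ofReal (10 / lam) * ν (D i) :=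
        ENNReal.tsum_le_tsum hterm
    _ = ENNReal.ofReal (10 / lam) * ν (⋃ i, D i) := by
        rw [measure_iUnion hDd hDm, ENNReal.tsum_mul_left]
    _ ≤ ENNReal.ofReal (10 / lam) * ν Set.univ := by
        gcongr
        exact subset_univ _
    _ = ENNReal.ofReal (10 / lam) * ENNReal.ofReal β := by
        rw [← ENNReal.ofReal_toReal (measure_ne_top ν Set.univ)]
    _ = ENNReal.ofReal (10 / lam * β) := (ENNReal.ofReal_mul (by positivity)).symm
    _ < ENNReal.ofReal (10 * ε) := by
        refine (ENNReal.ofReal_lt_ofReal_iff (by linarith)).mpr ?_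
        have h5 : 10 / lam * β = 5 * ε := by
          rw [hlamdef]
          field_simp
          ring
        rw [h5]
        linarith
end

section
/- Let n ≥ 2 and let f : ℝⁿ → ℝ be continuous, nonnegative and Lebesgue integrable with β := ∫_{ℝⁿ} f dx, such that y ↦ log(|y|/|x−y|) f(y) is Lebesgue integrable for every x ∈ ℝⁿ. Let x, y ∈ ℝⁿ with |x−y| = 2 and midpoint p₀ = (x+y)/2. Define u₋(x) := −(1/c_n) ∫_{ℝⁿ} log(|y|/|x−y|) f(y) dy, u₂(x) := −(1/c_n) ∫_{ℝⁿ ∖ B(p₀,10)} log(|y|/|x−y|) f(y) dy, and c̄ := −(1/c_n) ∫_{B(p₀,10)} log|y| · f(y) dy. Then there exists a constant C₄ > 0 depending only on n and β such that for every L ≥ 0 and every 1-Lipschitz curve γ : [0,L] → ℝⁿ with γ(0) = x, γ(L) = y and image contained in the closed ball of center p₀ and radius 1, one has ∫₀^L e^{u₋(γ(t))} dt ≥ C₄ · e^{u₂(p₀)} · e^{c̄}. -/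
open MeasureTheory Metric Set
open scoped ENNReal

lemma cN_pos {n : ℕ} (hn : 2 ≤ n) : 0 < cN n := by
  have h1 : (0:ℝ) < (2:ℝ) ^ ((n : ℝ) - 2) := Real.rpow_pos_of_pos (by norm_num) _
  have h2 : 0 < Real.Gamma ((n : ℝ) / 2) := by
    apply Real.Gamma_pos_of_pos
    positivity
  have h3 : (0:ℝ) < Real.pi ^ ((n : ℝ) / 2) := Real.rpow_pos_of_pos Real.pi_pos _
  unfold cN
  positivity

-- helper: aux rpow facts
lemma rpow_neg_half_of_neg {x : ℝ} (hx : x < 0) : x ^ (-(1/2) : ℝ) = 0 := by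
  rw [Real.rpow_def_of_neg hx]
  have : Real.cos (-(1/2) * Real.pi) = 0 := by
    rw [show (-(1/2) : ℝ) * Real.pi = -(Real.pi/2) by ring, Real.cos_neg,
      Real.cos_pi_div_two]
  rw [this, mul_zero]

lemma rpow_neg_half_nonneg (x : ℝ) : 0 ≤ x ^ (-(1/2) : ℝ) := by
  rcases lt_or_ge x 0 with h | h
  · rw [rpow_neg_half_of_neg h]
  · exact Real.rpow_nonneg h _

lemma log_inv_le_rpow {t : ℝ} (ht : 0 ≤ t) : Real.log t⁻¹ ≤ 2 * t ^ (-(1/2) : ℝ) := by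
  rcases eq_or_lt_of_le ht with h | h
  · simp [← h]
  · have h1 : Real.log (t ^ (-(1/2):ℝ)) ≤ t ^ (-(1/2):ℝ) - 1 :=
      Real.log_le_sub_one_of_pos (Real.rpow_pos_of_pos h _)
    rw [Real.log_rpow h] at h1
    rw [Real.log_inv]
    nlinarith [Real.rpow_nonneg ht (-(1/2):ℝ)]

/-- the universal constant bounding `∫ log 1/|u|` -/
noncomputable def C0 : ℝ :=
  ∫ u in Icc (-1:ℝ) 1, 2 * (u ^ (-(1/2) : ℝ) + (-u) ^ (-(1/2) : ℝ))

lemma C0_integrand_nonneg (u : ℝ) :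
    0 ≤ 2 * (u ^ (-(1/2) : ℝ) + (-u) ^ (-(1/2) : ℝ)) := by
  have := rpow_neg_half_nonneg u; have := rpow_neg_half_nonneg (-u); linarith

lemma C0_integrable :
    IntegrableOn (fun u : ℝ => 2 * (u ^ (-(1/2) : ℝ) + (-u) ^ (-(1/2) : ℝ)))
      (Icc (-1:ℝ) 1) := by
  have h1 : IntervalIntegrable (fun x : ℝ => x ^ (-(1/2):ℝ)) volume (-1) 1 :=
    intervalIntegral.intervalIntegrable_rpow' (by norm_num)
  have h2 : IntervalIntegrable (fun x : ℝ => (-x) ^ (-(1/2):ℝ)) volume (-1) 1 := by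
    have := (IntervalIntegrable.iff_comp_neg (f := fun x : ℝ => x ^ (-(1/2):ℝ)) (a := -1) (b := 1)).mp
      (intervalIntegral.intervalIntegrable_rpow'
        (a := -1) (b := 1) (r := -(1/2)) (by norm_num))
    simpa using this.symm
  have h3 := ((h1.add h2).const_mul 2).1
  have h4 : IntegrableOn (fun u : ℝ => 2 * (u ^ (-(1/2) : ℝ) + (-u) ^ (-(1/2) : ℝ)))
      (Ioc (-1:ℝ) 1) := by simpa [IntegrableOn] using h3
  exact h4.congr_set_ae Ioc_ae_eq_Icc.symm

lemma C0_nonneg : 0 ≤ C0 :=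
  setIntegral_nonneg measurableSet_Icc fun u _ => C0_integrand_nonneg u

lemma log_ptwise (u : ℝ) :
    ENNReal.ofReal (Real.log |u|⁻¹) ≤
      ENNReal.ofReal (2 * (u ^ (-(1/2) : ℝ) + (-u) ^ (-(1/2) : ℝ))) := by
  apply ENNReal.ofReal_le_ofReal
  rcases lt_trichotomy u 0 with h | h | h
  · have : |u| = -u := abs_of_neg h
    rw [this]
    have h2 := log_inv_le_rpow (t := -u) (by linarith)
    have h3 := rpow_neg_half_of_neg h
    linarith
  · simp [h]
  · have : |u| = u := abs_of_pos h
    rw [this]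
    have h2 := log_inv_le_rpow (t := u) h.le
    have h3 := rpow_neg_half_of_neg (show -u < 0 by linarith)
    linarith

/-- uniform bound on the logarithmic line integral -/
lemma Jbound (c : ℝ) :
    (∫⁻ s in Icc (-1:ℝ) 1, ENNReal.ofReal (Real.log |s - c|⁻¹)) ≤
      ENNReal.ofReal C0 := by
  have hemb : MeasurableEmbedding (fun s : ℝ => s - c) :=
    (MeasurableEquiv.subRight c).measurableEmbedding
  have hmp : MeasurePreserving (fun s : ℝ => s - c) volume volume :=
    measurePreserving_sub_right volume c
  have hpre : (fun s : ℝ => s - c) ⁻¹' (Icc (-1 - c) (1 - c)) = Icc (-1 : ℝ) 1 := by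
    ext s
    simp only [mem_preimage, mem_Icc]
    constructor
    · rintro ⟨h1, h2⟩; exact ⟨by linarith, by linarith⟩
    · rintro ⟨h1, h2⟩; exact ⟨by linarith, by linarith⟩
  have step1 : (∫⁻ s in Icc (-1:ℝ) 1, ENNReal.ofReal (Real.log |s - c|⁻¹)) =
      ∫⁻ u in Icc (-1 - c) (1 - c), ENNReal.ofReal (Real.log |u|⁻¹) := by
    have h := hmp.setLIntegral_comp_preimage_emb hemb
      (fun u => ENNReal.ofReal (Real.log |u|⁻¹)) (Icc (-1 - c) (1 - c))
    rw [hpre] at h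
    exact h
  rw [step1]
  have step2 : (∫⁻ u in Icc (-1 - c) (1 - c), ENNReal.ofReal (Real.log |u|⁻¹)) ≤
      ∫⁻ u, ENNReal.ofReal (Real.log |u|⁻¹) := setLIntegral_le_lintegral _ _
  have hvanish : ∀ u : ℝ, u ∉ Icc (-1:ℝ) 1 → ENNReal.ofReal (Real.log |u|⁻¹) = 0 := by
    intro u hu
    have h1 : 1 ≤ |u| := by
      simp only [mem_Icc, not_and_or, not_le] at hu
      rcases hu with h | h
      · rw [abs_of_neg (by linarith)]; linarith
      · rw [abs_of_pos (by linarith)]; linarith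
    have : Real.log |u|⁻¹ ≤ 0 := by
      rw [Real.log_inv]
      have := Real.log_nonneg h1
      linarith
    exact ENNReal.ofReal_eq_zero.2 this
  have step3 : (∫⁻ u, ENNReal.ofReal (Real.log |u|⁻¹)) =
      ∫⁻ u in Icc (-1:ℝ) 1, ENNReal.ofReal (Real.log |u|⁻¹) := by
    rw [← lintegral_add_compl (fun u => ENNReal.ofReal (Real.log |u|⁻¹))
      (measurableSet_Icc (a := (-1:ℝ)) (b := 1))]
    have : (∫⁻ u in (Icc (-1:ℝ) 1)ᶜ, ENNReal.ofReal (Real.log |u|⁻¹)) = 0 := by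
      rw [← lintegral_zero (μ := volume.restrict (Icc (-1:ℝ) 1)ᶜ)]
      apply setLIntegral_congr_fun measurableSet_Icc.compl
      exact fun u hu => hvanish u hu
    rw [this, add_zero]
  have step4 : (∫⁻ u in Icc (-1:ℝ) 1, ENNReal.ofReal (Real.log |u|⁻¹)) ≤
      ∫⁻ u in Icc (-1:ℝ) 1,
        ENNReal.ofReal (2 * (u ^ (-(1/2) : ℝ) + (-u) ^ (-(1/2) : ℝ))) :=
    lintegral_mono fun u => log_ptwise u
  have step5 : (∫⁻ u in Icc (-1:ℝ) 1,
      ENNReal.ofReal (2 * (u ^ (-(1/2) : ℝ) + (-u) ^ (-(1/2) : ℝ)))) =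
      ENNReal.ofReal C0 := by
    rw [← ofReal_integral_eq_lintegral_ofReal C0_integrable
      (ae_of_all _ fun u => C0_integrand_nonneg u)]
    rfl
  calc (∫⁻ u in Icc (-1 - c) (1 - c), ENNReal.ofReal (Real.log |u|⁻¹))
      ≤ ∫⁻ u, ENNReal.ofReal (Real.log |u|⁻¹) := step2
    _ = ∫⁻ u in Icc (-1:ℝ) 1, ENNReal.ofReal (Real.log |u|⁻¹) := step3
    _ ≤ _ := step4
    _ = _ := step5


lemma ofReal_integral_le {α : Type*} [MeasurableSpace α] {μ : Measure α}
    {g : α → ℝ} (hg : Integrable g μ) :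
    ENNReal.ofReal (∫ a, g a ∂μ) ≤ ∫⁻ a, ENNReal.ofReal (g a) ∂μ := by
  have h1 : (∫ a, g a ∂μ) ≤ ∫ a, max (g a) 0 ∂μ := by
    apply integral_mono hg (hg.pos_part) fun a => le_max_left _ _
  have h2 : ENNReal.ofReal (∫ a, max (g a) 0 ∂μ) =
      ∫⁻ a, ENNReal.ofReal (max (g a) 0) ∂μ :=
    ofReal_integral_eq_lintegral_ofReal hg.pos_part (ae_of_all _ fun a => le_max_right _ _)
  have h3 : ∀ a : ℝ, ENNReal.ofReal (max a 0) = ENNReal.ofReal a := by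
    intro a
    rcases le_total a 0 with h | h
    · rw [max_eq_right h, ENNReal.ofReal_zero, ENNReal.ofReal_eq_zero.2 h]
    · rw [max_eq_left h]
  calc ENNReal.ofReal (∫ a, g a ∂μ) ≤ ENNReal.ofReal (∫ a, max (g a) 0 ∂μ) :=
        ENNReal.ofReal_le_ofReal h1
    _ = ∫⁻ a, ENNReal.ofReal (max (g a) 0) ∂μ := h2
    _ = ∫⁻ a, ENNReal.ofReal (g a) ∂μ := by simp only [h3]

section Euclid
variable {n : ℕ}
local notation "E" => EuclideanSpace ℝ (Fin n)

lemma hyperplane_null [Fact (1 ≤ n)] (e : E) (he : ‖e‖ = 1) (c : ℝ) :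
    volume {y : E | (inner ℝ e y : ℝ) = c} = 0 := by
  set K : Submodule ℝ E := (Submodule.span ℝ ({e} : Set E))ᗮ with hK
  have hKne : K ≠ ⊤ := by
    intro h
    have he' : e ∈ K := h ▸ Submodule.mem_top
    rw [hK, Submodule.mem_orthogonal_singleton_iff_inner_left] at he'
    rw [real_inner_self_eq_norm_sq, he] at he'
    norm_num at he'
  have hset : {y : E | (inner ℝ e y : ℝ) = c} = (fun y : E => y + (-(c • e))) ⁻¹' K := by
    ext y
    simp only [mem_setOf_eq, mem_preimage, SetLike.mem_coe, hK,
      Submodule.mem_orthogonal_singleton_iff_inner_left]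
    rw [← neg_smul, inner_add_left, inner_smul_left, real_inner_self_eq_norm_sq, he]
    rw [real_inner_comm]
    simp only [starRingEnd_apply, star_trivial, one_pow, mul_one]
    constructor <;> intro h <;> linarith
  rw [hset, measure_preimage_add_right]
  exact Measure.addHaar_submodule volume K hKne

end Euclid

/-- An "expanding" monotone map pushes restricted Lebesgue measure to a measure
dominated by Lebesgue measure. -/
lemma map_expanding_le_volume {θ : ℝ → ℝ} (hθm : Monotone θ)
    (hexp : ∀ a ∈ Icc (-1:ℝ) 1, ∀ b ∈ Icc (-1:ℝ) 1, a ≤ b → b - a ≤ θ b - θ a) :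
    Measure.map θ (volume.restrict (Icc (-1:ℝ) 1)) ≤ volume := by
  rw [Measure.le_iff]
  intro A hA
  rw [Measure.map_apply hθm.measurable hA, Measure.restrict_apply (hθm.measurable hA)]
  set S : Set ℝ := θ ⁻¹' A ∩ Icc (-1:ℝ) 1 with hS
  set Φ : ℝ → ℝ := fun u => sSup (insert (-1) {s ∈ Icc (-1:ℝ) 1 | θ s ≤ u}) with hΦ
  have hΦθ : ∀ a ∈ Icc (-1:ℝ) 1, Φ (θ a) = a := by
    intro a ha
    have hbdd : BddAbove (insert (-1) {s ∈ Icc (-1:ℝ) 1 | θ s ≤ θ a}) := by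
      apply BddAbove.mono _ (bddAbove_Icc (a := (-1:ℝ)) (b := 1))
      intro u hu
      rcases hu with h | h
      · rw [h]; exact left_mem_Icc.2 (by norm_num)
      · exact h.1
    have hub : ∀ u ∈ insert (-1) {s ∈ Icc (-1:ℝ) 1 | θ s ≤ θ a}, u ≤ a := by
      intro u hu
      rcases hu with h | h
      · rw [h]; exact ha.1
      · by_contra hcon
        push_neg at hcon
        have := hexp a ha u h.1 hcon.le
        linarith [h.2]
    have hmem : a ∈ insert (-1) {s ∈ Icc (-1:ℝ) 1 | θ s ≤ θ a} :=
      mem_insert_of_mem _ ⟨ha, le_rfl⟩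
    exact le_antisymm (csSup_le ⟨a, hmem⟩ hub) (le_csSup hbdd hmem)
  have hlip : LipschitzOnWith 1 Φ (θ '' Icc (-1:ℝ) 1) := by
    rw [lipschitzOnWith_iff_dist_le_mul]
    rintro u ⟨a, ha, rfl⟩ v ⟨b, hb, rfl⟩
    rw [hΦθ a ha, hΦθ b hb, Real.dist_eq, Real.dist_eq]
    simp only [NNReal.coe_one, one_mul]
    rcases le_total a b with h | h
    · have h1 := hexp a ha b hb h
      have h2 := hθm h
      rw [abs_of_nonpos (by linarith), abs_of_nonpos (by linarith)]
      linarith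
    · have h1 := hexp b hb a ha h
      have h2 := hθm h
      rw [abs_of_nonneg (by linarith), abs_of_nonneg (by linarith)]
      linarith
  have hSsub : S ⊆ Icc (-1:ℝ) 1 := inter_subset_right
  have hSeq : S = Φ '' (θ '' S) := by
    ext s
    constructor
    · intro hs
      exact ⟨θ s, mem_image_of_mem θ hs, hΦθ s (hSsub hs)⟩
    · rintro ⟨u, ⟨a, haS, rfl⟩, rfl⟩
      rw [hΦθ a (hSsub haS)]
      exact haS
  have himg : θ '' S ⊆ A := by
    rintro u ⟨a, haS, rfl⟩
    exact haS.1
  calc volume S = μH[1] S := by rw [MeasureTheory.hausdorffMeasure_real]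
    _ = μH[1] (Φ '' (θ '' S)) := by rw [← hSeq]
    _ ≤ (1:NNReal) ^ (1:ℝ) * μH[1] (θ '' S) :=
        (hlip.mono (image_mono hSsub)).hausdorffMeasure_image_le zero_le_one
    _ = μH[1] (θ '' S) := by simp
    _ = volume (θ '' S) := by rw [MeasureTheory.hausdorffMeasure_real]
    _ ≤ volume A := measure_mono himg


section Pot
variable {n : ℕ}
local notation "E" => EuclideanSpace ℝ (Fin n)

lemma restrict_null {α : Type*} [MeasurableSpace α] {μ : Measure α} {A : Set α}
    (h : μ A = 0) (S : Set α) : μ.restrict S A = 0 :=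
  le_antisymm (le_trans (Measure.le_iff'.1 Measure.restrict_le_self A) h.le) (by simp)

lemma euclid_nontrivial (hn : 2 ≤ n) : Nontrivial (EuclideanSpace ℝ (Fin n)) := by
  refine ⟨EuclideanSpace.single (⟨0, by omega⟩ : Fin n) (1:ℝ), 0, fun h => ?_⟩
  have := congrArg (fun v : E => ‖v‖) h
  simp [EuclideanSpace.norm_single] at this

lemma ae_ne_restrict (hn : 2 ≤ n) (z : E) (S : Set (EuclideanSpace ℝ (Fin n))) :
    ∀ᵐ y ∂(volume.restrict S), y ≠ z := by
  haveI := euclid_nontrivial hn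
  have h : volume ({z} : Set E) = 0 := measure_singleton z
  rw [Filter.eventually_iff, mem_ae_iff]
  have : {y : E | y ≠ z}ᶜ = {z} := by ext y; simp
  rw [this]
  exact restrict_null h S

lemma log_ratio {y w : E} (hy : y ≠ (0:E)) (hw : w ≠ (0:E)) :
    Real.log (‖y‖ / ‖w‖) = Real.log ‖y‖ - Real.log ‖w‖ :=
  Real.log_div (norm_ne_zero_iff.2 hy) (norm_ne_zero_iff.2 hw)

variable {f : EuclideanSpace ℝ (Fin n) → ℝ} {p₀ : EuclideanSpace ℝ (Fin n)}

lemma logPot_core_sm (hfc : Continuous f) :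
    StronglyMeasurable (fun z : E => ∫ y, Real.log (‖y‖ / ‖z - y‖) * f y) := by
  apply MeasureTheory.StronglyMeasurable.integral_prod_right
    (f := fun (z : E) (y : E) => Real.log (‖y‖ / ‖z - y‖) * f y)
  apply Measurable.stronglyMeasurable
  apply Measurable.mul
  · exact Real.measurable_log.comp
      ((measurable_norm.comp measurable_snd).div
        ((measurable_fst.sub measurable_snd).norm))
  · exact hfc.measurable.comp measurable_snd

lemma int_log_norm (hn : 2 ≤ n) (hfi : Integrable f)
    (hint : ∀ x : E, Integrable (fun y => Real.log (‖y‖ / ‖x - y‖) * f y)) :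
    IntegrableOn (fun y => Real.log ‖y‖ * f y) (ball p₀ 10) := by
  set q : E := p₀ + (20:ℝ) • EuclideanSpace.single (⟨0, by omega⟩ : Fin n) (1:ℝ) with hq
  have hqp : dist q p₀ = 20 := by
    rw [dist_eq_norm, hq, add_sub_cancel_left, norm_smul, EuclideanSpace.norm_single]
    norm_num
  have hqy : ∀ y : E, y ∈ ball p₀ 10 → 10 ≤ ‖q - y‖ ∧ ‖q - y‖ ≤ 30 := by
    intro y hy
    rw [mem_ball] at hy
    have h1 : dist q y ≤ dist q p₀ + dist p₀ y := dist_triangle _ _ _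
    have h2 : dist q p₀ ≤ dist q y + dist y p₀ := dist_triangle _ _ _
    rw [dist_comm p₀ y] at h1
    rw [← dist_eq_norm]
    constructor <;> [linarith [hqp ▸ h2]; linarith [hqp ▸ h1]]
  have hbdd : IntegrableOn (fun y => Real.log ‖q - y‖ * f y) (ball p₀ 10) := by
    apply Integrable.bdd_mul (c := Real.log 30) hfi.integrableOn
    · exact (Real.measurable_log.comp
        ((continuous_const.sub continuous_id).norm).measurable).aestronglyMeasurable
    · filter_upwards [ae_restrict_mem measurableSet_ball] with y hy
      obtain ⟨h10, h30⟩ := hqy y hy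
      have hpos : (0:ℝ) ≤ Real.log ‖q - y‖ := Real.log_nonneg (by linarith)
      rw [Real.norm_eq_abs, abs_of_nonneg hpos]
      exact Real.log_le_log (by linarith) h30
  have hsum : IntegrableOn
      (fun y => Real.log (‖y‖ / ‖q - y‖) * f y + Real.log ‖q - y‖ * f y)
      (ball p₀ 10) := (hint q).integrableOn.add hbdd
  apply hsum.congr
  filter_upwards [ae_ne_restrict hn 0 (ball p₀ 10), ae_restrict_mem measurableSet_ball]
    with y hy0 hyB
  have hqy' : q - y ≠ 0 := by
    intro h
    have := (hqy y hyB).1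
    rw [h, norm_zero] at this; linarith
  rw [log_ratio hy0 hqy']
  ring

lemma int_log_sub (hn : 2 ≤ n) (hfi : Integrable f)
    (hint : ∀ x : E, Integrable (fun y => Real.log (‖y‖ / ‖x - y‖) * f y)) (z : E) :
    IntegrableOn (fun y => Real.log ‖z - y‖ * f y) (ball p₀ 10) := by
  have h1 := int_log_norm (p₀ := p₀) hn hfi hint
  have hsum : IntegrableOn
      (fun y => Real.log ‖y‖ * f y - Real.log (‖y‖ / ‖z - y‖) * f y) (ball p₀ 10) :=
    h1.sub (hint z).integrableOn
  apply hsum.congr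
  filter_upwards [ae_ne_restrict hn 0 (ball p₀ 10), ae_ne_restrict hn z (ball p₀ 10)]
    with y hy0 hyz
  have hzy : z - y ≠ 0 := sub_ne_zero.2 (Ne.symm hyz)
  rw [log_ratio hy0 hzy]
  ring

lemma pot_split (hn : 2 ≤ n) (hfi : Integrable f)
    (hint : ∀ x : E, Integrable (fun y => Real.log (‖y‖ / ‖x - y‖) * f y)) (z : E) :
    (∫ y, Real.log (‖y‖ / ‖z - y‖) * f y) =
      (∫ y in (ball p₀ 10)ᶜ, Real.log (‖y‖ / ‖z - y‖) * f y) +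
      ((∫ y in ball p₀ 10, Real.log ‖y‖ * f y) -
        (∫ y in ball p₀ 10, Real.log ‖z - y‖ * f y)) := by
  have h0 := integral_add_compl (μ := volume) (s := ball p₀ 10)
    measurableSet_ball (hint z)
  have h1 : (∫ y in ball p₀ 10, Real.log (‖y‖ / ‖z - y‖) * f y) =
      (∫ y in ball p₀ 10, Real.log ‖y‖ * f y) -
        (∫ y in ball p₀ 10, Real.log ‖z - y‖ * f y) := by
    rw [← integral_sub (int_log_norm (p₀ := p₀) hn hfi hint)
      (int_log_sub (p₀ := p₀) hn hfi hint z)]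
    apply integral_congr_ae
    filter_upwards [ae_ne_restrict hn 0 (ball p₀ 10), ae_ne_restrict hn z (ball p₀ 10)]
      with y hy0 hyz
    have hzy : z - y ≠ 0 := sub_ne_zero.2 (Ne.symm hyz)
    rw [log_ratio hy0 hzy]
    ring
  linarith [h0, h1]

end Pot


section Pot4
variable {n : ℕ}
local notation "E" => EuclideanSpace ℝ (Fin n)
variable {f : EuclideanSpace ℝ (Fin n) → ℝ} {p₀ : EuclideanSpace ℝ (Fin n)}


lemma T1_upper (hn : 2 ≤ n) (hf0 : ∀ z, 0 ≤ f z) (hfi : Integrable f)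
    (hint : ∀ x : E, Integrable (fun y => Real.log (‖y‖ / ‖x - y‖) * f y))
    {z : E} (hz : z ∈ closedBall p₀ 1) :
    (∫ y in (ball p₀ 10)ᶜ, Real.log (‖y‖ / ‖z - y‖) * f y) ≤
      (∫ y in (ball p₀ 10)ᶜ, Real.log (‖y‖ / ‖p₀ - y‖) * f y) +
        Real.log (10/9) * ∫ y, f y := by
  have key : (∫ y in (ball p₀ 10)ᶜ, Real.log (‖y‖ / ‖z - y‖) * f y) ≤
      ∫ y in (ball p₀ 10)ᶜ,
        (Real.log (‖y‖ / ‖p₀ - y‖) * f y + Real.log (10/9) * f y) := by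
    apply integral_mono_ae (hint z).integrableOn
      ((hint p₀).integrableOn.add ((hfi.integrableOn).const_mul _))
    filter_upwards [ae_ne_restrict hn 0 ((ball p₀ 10)ᶜ),
      ae_restrict_mem measurableSet_ball.compl] with y hy0 hyB
    have hd : 10 ≤ dist p₀ y := by
      simp only [mem_compl_iff, mem_ball, not_lt] at hyB
      rw [dist_comm]; exact hyB
    rw [dist_eq_norm] at hd
    have hzp : dist z p₀ ≤ 1 := mem_closedBall.1 hz
    have hzy : ‖p₀ - y‖ - 1 ≤ ‖z - y‖ := by
      have h := norm_sub_norm_le (p₀ - y) (z - y)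
      have h2 : ‖(p₀ - y) - (z - y)‖ = dist p₀ z := by
        rw [dist_eq_norm]; congr 1; abel
      rw [h2, dist_comm p₀ z] at h
      linarith
    have hzpos : (0:ℝ) < ‖z - y‖ := by linarith
    have hppos : (0:ℝ) < ‖p₀ - y‖ := by linarith
    have hlog : Real.log ‖p₀ - y‖ - Real.log ‖z - y‖ ≤ Real.log (10/9) := by
      have h1 : ‖p₀ - y‖ ≤ (10/9) * ‖z - y‖ := by linarith
      have h2 : Real.log ‖p₀ - y‖ ≤ Real.log ((10/9) * ‖z - y‖) :=
        Real.log_le_log hppos h1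
      rw [Real.log_mul (by norm_num) (ne_of_gt hzpos)] at h2
      linarith
    have hy0' : ‖y‖ ≠ 0 := norm_ne_zero_iff.2 hy0
    simp only [Pi.add_apply]
    rw [Real.log_div hy0' (ne_of_gt hzpos), Real.log_div hy0' (ne_of_gt hppos)]
    have hfy := hf0 y
    nlinarith [hlog, hfy]
  have h2 : (∫ y in (ball p₀ 10)ᶜ,
      (Real.log (‖y‖ / ‖p₀ - y‖) * f y + Real.log (10/9) * f y)) =
      (∫ y in (ball p₀ 10)ᶜ, Real.log (‖y‖ / ‖p₀ - y‖) * f y) +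
        Real.log (10/9) * ∫ y in (ball p₀ 10)ᶜ, f y := by
    rw [integral_add (hint p₀).integrableOn ((hfi.integrableOn).const_mul _),
      integral_const_mul]
  have h3 : (∫ y in (ball p₀ 10)ᶜ, f y) ≤ ∫ y, f y :=
    setIntegral_le_integral hfi (ae_of_all _ hf0)
  have h4 : (0:ℝ) ≤ Real.log (10/9) := Real.log_nonneg (by norm_num)
  calc (∫ y in (ball p₀ 10)ᶜ, Real.log (‖y‖ / ‖z - y‖) * f y) ≤ _ := key
    _ = _ := h2
    _ ≤ _ := by nlinarith [h3, h4]

lemma T1_lower (hn : 2 ≤ n) (hf0 : ∀ z, 0 ≤ f z) (hfi : Integrable f)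
    (hint : ∀ x : E, Integrable (fun y => Real.log (‖y‖ / ‖x - y‖) * f y))
    {z : E} (hz : z ∈ closedBall p₀ 1) :
    (∫ y in (ball p₀ 10)ᶜ, Real.log (‖y‖ / ‖p₀ - y‖) * f y) -
        Real.log (11/10) * ∫ y, f y ≤
      (∫ y in (ball p₀ 10)ᶜ, Real.log (‖y‖ / ‖z - y‖) * f y) := by
  have key : (∫ y in (ball p₀ 10)ᶜ, Real.log (‖y‖ / ‖p₀ - y‖) * f y) ≤
      ∫ y in (ball p₀ 10)ᶜ,
        (Real.log (‖y‖ / ‖z - y‖) * f y + Real.log (11/10) * f y) := by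
    apply integral_mono_ae (hint p₀).integrableOn
      ((hint z).integrableOn.add ((hfi.integrableOn).const_mul _))
    filter_upwards [ae_ne_restrict hn 0 ((ball p₀ 10)ᶜ),
      ae_restrict_mem measurableSet_ball.compl] with y hy0 hyB
    have hd : 10 ≤ dist p₀ y := by
      simp only [mem_compl_iff, mem_ball, not_lt] at hyB
      rw [dist_comm]; exact hyB
    rw [dist_eq_norm] at hd
    have hzp : dist z p₀ ≤ 1 := mem_closedBall.1 hz
    have hzy : ‖z - y‖ ≤ ‖p₀ - y‖ + 1 := by
      have h := norm_sub_norm_le (z - y) (p₀ - y)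
      have h2 : ‖(z - y) - (p₀ - y)‖ = dist z p₀ := by
        rw [dist_eq_norm]; congr 1; abel
      rw [h2] at h
      linarith
    have hzy2 : ‖p₀ - y‖ - 1 ≤ ‖z - y‖ := by
      have h := norm_sub_norm_le (p₀ - y) (z - y)
      have h2 : ‖(p₀ - y) - (z - y)‖ = dist p₀ z := by
        rw [dist_eq_norm]; congr 1; abel
      rw [h2, dist_comm p₀ z] at h
      linarith
    have hzpos : (0:ℝ) < ‖z - y‖ := by linarith
    have hppos : (0:ℝ) < ‖p₀ - y‖ := by linarith
    have hlog : Real.log ‖z - y‖ - Real.log ‖p₀ - y‖ ≤ Real.log (11/10) := by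
      have h1 : ‖z - y‖ ≤ (11/10) * ‖p₀ - y‖ := by linarith
      have h2 : Real.log ‖z - y‖ ≤ Real.log ((11/10) * ‖p₀ - y‖) :=
        Real.log_le_log hzpos h1
      rw [Real.log_mul (by norm_num) (ne_of_gt hppos)] at h2
      linarith
    have hy0' : ‖y‖ ≠ 0 := norm_ne_zero_iff.2 hy0
    simp only [Pi.add_apply]
    rw [Real.log_div hy0' (ne_of_gt hzpos), Real.log_div hy0' (ne_of_gt hppos)]
    have hfy := hf0 y
    nlinarith [hlog, hfy]
  have h2 : (∫ y in (ball p₀ 10)ᶜ,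
      (Real.log (‖y‖ / ‖z - y‖) * f y + Real.log (11/10) * f y)) =
      (∫ y in (ball p₀ 10)ᶜ, Real.log (‖y‖ / ‖z - y‖) * f y) +
        Real.log (11/10) * ∫ y in (ball p₀ 10)ᶜ, f y := by
    rw [integral_add (hint z).integrableOn ((hfi.integrableOn).const_mul _),
      integral_const_mul]
  have h3 : (∫ y in (ball p₀ 10)ᶜ, f y) ≤ ∫ y, f y :=
    setIntegral_le_integral hfi (ae_of_all _ hf0)
  have h4 : (0:ℝ) ≤ Real.log (11/10) := Real.log_nonneg (by norm_num)
  nlinarith [key, h2, h3, h4]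

lemma T3_upper (hn : 2 ≤ n) (hf0 : ∀ z, 0 ≤ f z) (hfi : Integrable f)
    (hint : ∀ x : E, Integrable (fun y => Real.log (‖y‖ / ‖x - y‖) * f y))
    {z : E} (hz : z ∈ closedBall p₀ 1)
    (hIB : IntegrableOn (fun y => Real.log ‖z - y‖ * f y) (ball p₀ 10)) :
    (∫ y in ball p₀ 10, Real.log ‖z - y‖ * f y) ≤ Real.log 12 * ∫ y, f y := by
  have key : (∫ y in ball p₀ 10, Real.log ‖z - y‖ * f y) ≤
      ∫ y in ball p₀ 10, Real.log 12 * f y := by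
    apply integral_mono_ae hIB ((hfi.integrableOn).const_mul _)
    filter_upwards [ae_restrict_mem measurableSet_ball] with y hyB
    have h1 : ‖z - y‖ ≤ 11 := by
      have h := dist_triangle z p₀ y
      rw [mem_ball] at hyB
      rw [← dist_eq_norm]
      have hzp : dist z p₀ ≤ 1 := mem_closedBall.1 hz
      rw [dist_comm p₀ y] at h
      linarith
    have hlog : Real.log ‖z - y‖ ≤ Real.log 12 := by
      rcases eq_or_lt_of_le (norm_nonneg (z - y)) with h | h
      · rw [← h, Real.log_zero]; exact Real.log_nonneg (by norm_num)
      · exact Real.log_le_log h (by linarith)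
    exact mul_le_mul_of_nonneg_right hlog (hf0 y)
  have h2 : (∫ y in ball p₀ 10, Real.log 12 * f y) =
      Real.log 12 * ∫ y in ball p₀ 10, f y := integral_const_mul _ _
  have h3 : (∫ y in ball p₀ 10, f y) ≤ ∫ y, f y :=
    setIntegral_le_integral hfi (ae_of_all _ hf0)
  have h4 : (0:ℝ) ≤ Real.log 12 := Real.log_nonneg (by norm_num)
  nlinarith [key, h2, h3, h4]

end Pot4



section PotW
variable {n : ℕ}
local notation "E" => EuclideanSpace ℝ (Fin n)
variable {f : EuclideanSpace ℝ (Fin n) → ℝ} {p₀ e : EuclideanSpace ℝ (Fin n)}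

lemma W_uncurry_meas (hfc : Continuous f) :
    Measurable (Function.uncurry (fun (s : ℝ) (y : E) =>
      ENNReal.ofReal (Real.log |s - (inner ℝ e (y - p₀) : ℝ)|⁻¹ * f y))) := by
  apply Measurable.ennreal_ofReal
  apply Measurable.mul
  · apply Real.measurable_log.comp
    apply Measurable.inv
    apply Measurable.abs
    apply Measurable.sub measurable_fst
    exact ((continuous_const.inner
      ((continuous_snd : Continuous (Prod.snd : ℝ × E → E)).sub
        continuous_const))).measurable
  · exact hfc.measurable.comp measurable_snd

lemma W_meas (hfc : Continuous f) :
    Measurable (fun s : ℝ => ∫⁻ y in ball p₀ 10,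
      ENNReal.ofReal (Real.log |s - (inner ℝ e (y - p₀) : ℝ)|⁻¹ * f y)) :=
  Measurable.lintegral_prod_right (W_uncurry_meas hfc)

lemma W_int_bound (hfc : Continuous f) (hf0 : ∀ z, 0 ≤ f z) (hfi : Integrable f) :
    (∫⁻ s in Icc (-1:ℝ) 1, ∫⁻ y in ball p₀ 10,
        ENNReal.ofReal (Real.log |s - (inner ℝ e (y - p₀) : ℝ)|⁻¹ * f y)) ≤
      ENNReal.ofReal (C0 * ∫ y, f y) := by
  have hswap := lintegral_lintegral_swap
    (μ := volume.restrict (Icc (-1:ℝ) 1)) (ν := volume.restrict (ball p₀ 10))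
    (f := fun (s : ℝ) (y : E) =>
      ENNReal.ofReal (Real.log |s - (inner ℝ e (y - p₀) : ℝ)|⁻¹ * f y))
    (W_uncurry_meas hfc).aemeasurable
  rw [hswap]
  have hinner : ∀ y : E, (∫⁻ s in Icc (-1:ℝ) 1,
      ENNReal.ofReal (Real.log |s - (inner ℝ e (y - p₀) : ℝ)|⁻¹ * f y)) ≤
      ENNReal.ofReal C0 * ENNReal.ofReal (f y) := by
    intro y
    have heq : ∀ s : ℝ, ENNReal.ofReal (Real.log |s - (inner ℝ e (y - p₀) : ℝ)|⁻¹ * f y)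
        = ENNReal.ofReal (Real.log |s - (inner ℝ e (y - p₀) : ℝ)|⁻¹) *
            ENNReal.ofReal (f y) := by
      intro s
      exact ENNReal.ofReal_mul' (hf0 y)
    simp only [heq]
    have hm : Measurable (fun s : ℝ =>
        ENNReal.ofReal (Real.log |s - (inner ℝ e (y - p₀) : ℝ)|⁻¹)) := by
      apply Measurable.ennreal_ofReal
      exact Real.measurable_log.comp ((measurable_id.sub measurable_const).abs.inv)
    rw [lintegral_mul_const _ hm]
    exact mul_le_mul_left (Jbound _) _
  calc (∫⁻ y in ball p₀ 10, ∫⁻ s in Icc (-1:ℝ) 1,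
        ENNReal.ofReal (Real.log |s - (inner ℝ e (y - p₀) : ℝ)|⁻¹ * f y)) ≤
      ∫⁻ y in ball p₀ 10, ENNReal.ofReal C0 * ENNReal.ofReal (f y) :=
        lintegral_mono fun y => hinner y
    _ = ENNReal.ofReal C0 * ∫⁻ y in ball p₀ 10, ENNReal.ofReal (f y) :=
        lintegral_const_mul _ (hfc.measurable.ennreal_ofReal.comp measurable_id)
    _ = ENNReal.ofReal C0 * ENNReal.ofReal (∫ y in ball p₀ 10, f y) := by
        rw [← ofReal_integral_eq_lintegral_ofReal hfi.integrableOn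
          (ae_of_all _ fun y => hf0 y)]
    _ ≤ ENNReal.ofReal C0 * ENNReal.ofReal (∫ y, f y) := by
        apply mul_le_mul_right
        exact ENNReal.ofReal_le_ofReal
          (setIntegral_le_integral hfi (ae_of_all _ hf0))
    _ = ENNReal.ofReal (C0 * ∫ y, f y) :=
        (ENNReal.ofReal_mul C0_nonneg).symm

end PotW


lemma arith_key1 {c m K a1 b1 b2 a3 : ℝ} (hc : 0 < c)
    (h1 : a1 ≤ b1 + K) (h3 : -m ≤ a3) :
    -(K + m) / c + -(1 / c) * b1 + -(1 / c) * b2 ≤ -(1 / c * (a1 + (b2 - a3))) := by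
  have hu : (0:ℝ) < 1/c := by positivity
  have A := mul_le_mul_of_nonneg_left h1 hu.le
  have B := mul_le_mul_of_nonneg_left h3 hu.le
  have e1 : -(K + m)/c = -(1/c*K) - 1/c*m := by ring
  have e2 : 1/c * (a1 + (b2 - a3)) = 1/c*a1 + 1/c*b2 - 1/c*a3 := by ring
  have e3 : 1/c * (b1 + K) = 1/c*b1 + 1/c*K := by ring
  have e4 : 1/c * -m = -(1/c*m) := by ring
  linarith

lemma arith_key2 {c a1 a3 b1 b2 P Q : ℝ} (hc : 0 < c)
    (h1 : b1 - Q ≤ a1) (h3 : a3 ≤ P) :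
    -(1 / c * (a1 + (b2 - a3))) ≤ 1/c * P - 1/c * (b1 - Q) - 1/c * b2 := by
  have hu : (0:ℝ) < 1/c := by positivity
  have A := mul_le_mul_of_nonneg_left h1 hu.le
  have B := mul_le_mul_of_nonneg_left h3 hu.le
  have e1 : 1/c * (a1 + (b2 - a3)) = 1/c*a1 + 1/c*b2 - 1/c*a3 := by ring
  have e2 : 1/c * (b1 - Q) = 1/c*b1 - 1/c*Q := by ring
  linarith

set_option maxHeartbeats 2000000 in
/-- lower bound along curves. There is `C₄ = C₄(n,β) > 0` such
that for `f ≥ 0` with `∫ f = β`, `u₋ = -logPot f`, points `x, y` at distance `2`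
with midpoint `p₀`, and any 1-Lipschitz curve `γ : [0,L] → ℝⁿ` from `x` to `y`
inside the closed unit ball around `p₀`,
`∫₀^L e^{u₋(γ(t))} dt ≥ C₄ e^{u₂(p₀)} e^{c̄}`. -/
theorem curve_integral_exp_neg_logPot_ge
    (n : ℕ) (hn : 2 ≤ n) (β : ℝ) :
    ∃ C₄ : ℝ, 0 < C₄ ∧
      ∀ f : EuclideanSpace ℝ (Fin n) → ℝ,
        Continuous f →
        (∀ z, 0 ≤ f z) →
        Integrable f →
        (∀ x : EuclideanSpace ℝ (Fin n),
          Integrable (fun z => Real.log (‖z‖ / ‖x - z‖) * f z)) →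
        (∫ z, f z) = β →
        ∀ x y : EuclideanSpace ℝ (Fin n), dist x y = 2 →
          ∀ L : ℝ, 0 ≤ L →
            ∀ γ : ℝ → EuclideanSpace ℝ (Fin n),
              LipschitzOnWith 1 γ (Set.Icc 0 L) → γ 0 = x → γ L = y →
              (∀ t ∈ Set.Icc 0 L, γ t ∈ closedBall (midpoint ℝ x y) 1) →
              C₄ *
                  Real.exp (-(1 / cN n) *
                    ∫ z in (ball (midpoint ℝ x y) 10)ᶜ,
                      Real.log (‖z‖ / ‖midpoint ℝ x y - z‖) * f z) *
                  Real.exp (-(1 / cN n) *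
                    ∫ z in ball (midpoint ℝ x y) 10, Real.log ‖z‖ * f z) ≤
                ∫ t in (0 : ℝ)..L, Real.exp (-(logPot n f (γ t))) := by
  classical
  have hc : 0 < cN n := cN_pos hn
  haveI : Fact (1 ≤ n) := ⟨by omega⟩
  refine ⟨Real.exp (-((Real.log (10/9)) * β + (2*C0*β + 1)) / cN n),
    Real.exp_pos _, ?_⟩
  intro f hfc hf0 hfi hint hβ x y hxy L hL γ hγ hγ0 hγL hball
  subst hβ
  set βI : ℝ := ∫ z, f z with hβI
  have hβ0 : 0 ≤ βI := integral_nonneg hf0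
  set p₀ : EuclideanSpace ℝ (Fin n) := midpoint ℝ x y with hp₀
  set e : EuclideanSpace ℝ (Fin n) := (2:ℝ)⁻¹ • (y - x) with he_def
  have hyx : ‖y - x‖ = 2 := by rw [← dist_eq_norm, dist_comm]; exact hxy
  have he : ‖e‖ = 1 := by
    rw [he_def, norm_smul, hyx]
    norm_num
  have hxp : x - p₀ = -((2:ℝ)⁻¹ • (y - x)) := by
    rw [hp₀, midpoint_eq_smul_add]
    have h2 : ((2:ℝ)⁻¹ + 2⁻¹ : ℝ) = 1 := by norm_num
    rw [show ((⅟2 : ℝ)) = (2:ℝ)⁻¹ from invOf_eq_inv 2]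
    module
  have hyp : y - p₀ = (2:ℝ)⁻¹ • (y - x) := by
    rw [hp₀, midpoint_eq_smul_add]
    rw [show ((⅟2 : ℝ)) = (2:ℝ)⁻¹ from invOf_eq_inv 2]
    module
  have hee : (inner ℝ e e : ℝ) = 1 := by
    rw [real_inner_self_eq_norm_sq, he]; norm_num
  have hinx : (inner ℝ e (x - p₀) : ℝ) = -1 := by
    rw [hxp, ← he_def, inner_neg_right, hee]
  have hiny : (inner ℝ e (y - p₀) : ℝ) = 1 := by
    rw [hyp, ← he_def, hee]
  -- the clamped curve
  set γ' : ℝ → EuclideanSpace ℝ (Fin n) := fun t => γ (max 0 (min t L)) with hγ'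
  have hclampIcc : ∀ t : ℝ, max 0 (min t L) ∈ Icc 0 L := by
    intro t
    constructor
    · exact le_max_left _ _
    · exact max_le hL (min_le_right _ _)
  have hγ'eq : ∀ t ∈ Icc (0:ℝ) L, γ' t = γ t := by
    rintro t ⟨ht0, htL⟩
    rw [hγ']
    simp only [min_eq_left htL, max_eq_right ht0]
  have hclip : LipschitzWith 1 (fun t : ℝ => max 0 (min t L)) :=
    (LipschitzWith.id.min_const L).const_max 0
  have hγ'cont : Continuous γ' := by
    apply hγ.continuousOn.comp_continuous hclip.continuous hclampIcc
  have hγ'dist : ∀ a b : ℝ, dist (γ' a) (γ' b) ≤ dist a b := by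
    intro a b
    have h1 : dist (γ' a) (γ' b) ≤ dist (max 0 (min a L)) (max 0 (min b L)) := by
      have := hγ.dist_le_mul _ (hclampIcc a) _ (hclampIcc b)
      simpa using this
    have h2 : dist (max 0 (min a L)) (max 0 (min b L)) ≤ dist a b := by
      simpa using hclip.dist_le_mul a b
    exact h1.trans h2
  -- height function
  set h : ℝ → ℝ := fun t => (inner ℝ e (γ' t - p₀) : ℝ) with hh
  have hγ'0 : γ' 0 = x := by rw [hγ'eq 0 (left_mem_Icc.2 hL), hγ0]
  have hγ'L : γ' L = y := by rw [hγ'eq L (right_mem_Icc.2 hL), hγL]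
  have hh0 : h 0 = -1 := by rw [hh]; simp only [hγ'0]; exact hinx
  have hhL : h L = 1 := by rw [hh]; simp only [hγ'L]; exact hiny
  have hhcont : Continuous h := by
    apply Continuous.inner continuous_const (hγ'cont.sub continuous_const)
  have hhlip : ∀ a b : ℝ, |h a - h b| ≤ |a - b| := by
    intro a b
    have h1 : h a - h b = (inner ℝ e (γ' a - γ' b) : ℝ) := by
      rw [hh]
      simp only
      rw [← inner_sub_right]
      congr 1
      abel
    rw [h1]
    calc |(inner ℝ e (γ' a - γ' b) : ℝ)| ≤ ‖e‖ * ‖γ' a - γ' b‖ :=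
          abs_real_inner_le_norm _ _
      _ = dist (γ' a) (γ' b) := by rw [he, one_mul, dist_eq_norm]
      _ ≤ dist a b := hγ'dist a b
      _ = |a - b| := Real.dist_eq a b
  -- hitting times
  set hitSet : ℝ → Set ℝ := fun s => {τ | τ ∈ Icc 0 L ∧ h τ = s} with hhit
  have hne : ∀ s ∈ Icc (-1:ℝ) 1, (hitSet s).Nonempty := by
    intro s hs
    have := intermediate_value_Icc hL hhcont.continuousOn
    rw [hh0, hhL] at this
    obtain ⟨τ, hτ, hτs⟩ := this hs
    exact ⟨τ, hτ, hτs⟩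
  have hclosed : ∀ s : ℝ, IsClosed (hitSet s) := by
    intro s
    have : hitSet s = Icc 0 L ∩ h ⁻¹' {s} := by
      ext τ; simp [hhit]
    rw [this]
    exact isClosed_Icc.inter (isClosed_singleton.preimage hhcont)
  have hbddb : ∀ s : ℝ, BddBelow (hitSet s) := by
    intro s
    apply BddBelow.mono _ (bddBelow_Icc (b := (0:ℝ)) (a := L))
    exact fun τ hτ => hτ.1
  set hit : ℝ → ℝ := fun s => sInf (hitSet s) with hhitdef
  have hhitmem : ∀ s ∈ Icc (-1:ℝ) 1, hit s ∈ Icc 0 L ∧ h (hit s) = s := by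
    intro s hs
    exact (hclosed s).csInf_mem (hne s hs) (hbddb s)
  have hhitmono : ∀ a ∈ Icc (-1:ℝ) 1, ∀ b ∈ Icc (-1:ℝ) 1, a ≤ b → hit a ≤ hit b := by
    intro a ha b hb hab
    obtain ⟨hIb, hhb⟩ := hhitmem b hb
    have hIVT := intermediate_value_Icc hIb.1 hhcont.continuousOn
    rw [hh0, hhb] at hIVT
    obtain ⟨τ, hτ, hτa⟩ := hIVT ⟨ha.1, hab⟩
    have hτL : τ ∈ Icc 0 L := ⟨hτ.1, hτ.2.trans hIb.2⟩
    exact le_trans (csInf_le (hbddb a) ⟨hτL, hτa⟩) hτ.2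
  set θ : ℝ → ℝ := fun s => hit (max (-1) (min s 1)) with hθ
  have hclamp1 : ∀ s ∈ Icc (-1:ℝ) 1, max (-1) (min s 1) = s := by
    rintro s ⟨hs1, hs2⟩
    rw [min_eq_left hs2, max_eq_right hs1]
  have hclampIcc1 : ∀ s : ℝ, max (-1) (min s 1) ∈ Icc (-1:ℝ) 1 := by
    intro s
    exact ⟨le_max_left _ _, max_le (by norm_num) (min_le_right _ _)⟩
  have hθeq : ∀ s ∈ Icc (-1:ℝ) 1, θ s = hit s := by
    intro s hs
    rw [hθ]
    simp only [hclamp1 s hs]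
  have hθmem : ∀ s ∈ Icc (-1:ℝ) 1, θ s ∈ Icc 0 L ∧ h (θ s) = s := by
    intro s hs
    rw [hθeq s hs]
    exact hhitmem s hs
  have hθall : ∀ s : ℝ, θ s ∈ Icc 0 L := by
    intro s
    exact (hhitmem _ (hclampIcc1 s)).1
  have hθmono : Monotone θ := by
    intro a b hab
    exact hhitmono _ (hclampIcc1 a) _ (hclampIcc1 b)
      (max_le_max le_rfl (min_le_min hab le_rfl))
  have hθexp : ∀ a ∈ Icc (-1:ℝ) 1, ∀ b ∈ Icc (-1:ℝ) 1, a ≤ b → b - a ≤ θ b - θ a := by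
    intro a ha b hb hab
    obtain ⟨hIa, hha⟩ := hθmem a ha
    obtain ⟨hIb, hhb⟩ := hθmem b hb
    have h2 := hhlip (θ b) (θ a)
    have h3 : θ a ≤ θ b := hθmono hab
    rw [abs_of_nonneg (by linarith : (0:ℝ) ≤ θ b - θ a)] at h2
    calc b - a = h (θ b) - h (θ a) := by rw [hha, hhb]
      _ ≤ |h (θ b) - h (θ a)| := le_abs_self _
      _ ≤ θ b - θ a := h2
  -- the weight function W, threshold m, Markov inequality
  set W : ℝ → ℝ≥0∞ := fun s => ∫⁻ y in ball p₀ 10,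
    ENNReal.ofReal (Real.log |s - (inner ℝ e (y - p₀) : ℝ)|⁻¹ * f y) with hW
  set m : ℝ := 2*C0*βI + 1 with hm_def
  have hm : 0 < m := by have := C0_nonneg; nlinarith
  set μ₁ : Measure ℝ := volume.restrict (Icc (-1:ℝ) 1) with hμ₁
  have hWmeas : Measurable W := by rw [hW]; exact W_meas hfc
  have hWint : (∫⁻ s, W s ∂μ₁) ≤ ENNReal.ofReal (C0 * βI) := by
    rw [hW, hμ₁]
    exact W_int_bound hfc hf0 hfi
  have hbadmeas : MeasurableSet {s : ℝ | ENNReal.ofReal m ≤ W s} :=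
    measurableSet_le measurable_const hWmeas
  have hmark : μ₁ {s : ℝ | ENNReal.ofReal m ≤ W s} ≤ 1 := by
    have h1 := meas_ge_le_lintegral_div (μ := μ₁) hWmeas.aemeasurable
      (ε := ENNReal.ofReal m)
      (by simp only [ne_eq, ENNReal.ofReal_eq_zero, not_le]; exact hm)
      ENNReal.ofReal_ne_top
    calc μ₁ {s : ℝ | ENNReal.ofReal m ≤ W s} ≤
        (∫⁻ s, W s ∂μ₁) / ENNReal.ofReal m := h1
      _ ≤ ENNReal.ofReal (C0 * βI) / ENNReal.ofReal m :=
          ENNReal.div_le_div_right hWint _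
      _ ≤ 1 := by
          apply ENNReal.div_le_of_le_mul
          rw [one_mul]
          apply ENNReal.ofReal_le_ofReal
          nlinarith [C0_nonneg]
  have hμIcc : μ₁ univ = 2 := by
    rw [hμ₁, Measure.restrict_apply_univ, Real.volume_Icc]
    norm_num
  have hgood : 1 ≤ μ₁ {s : ℝ | W s < ENNReal.ofReal m} := by
    have hcompl : {s : ℝ | W s < ENNReal.ofReal m} =
        {s : ℝ | ENNReal.ofReal m ≤ W s}ᶜ := by
      ext s; simp [not_le]
    have hfinbad : μ₁ {s : ℝ | ENNReal.ofReal m ≤ W s} ≠ ⊤ := by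
      refine ne_top_of_le_ne_top ?_ (measure_mono (subset_univ _))
      rw [hμIcc]
      exact ENNReal.ofNat_ne_top
    rw [hcompl, measure_compl hbadmeas hfinbad, hμIcc]
    apply ENNReal.le_sub_of_add_le_left hfinbad
    calc μ₁ {s : ℝ | ENNReal.ofReal m ≤ W s} + 1 ≤ 1 + 1 := add_le_add_left hmark 1
      _ = 2 := one_add_one_eq_two
  -- names for the two fixed integrals
  set IT1p : ℝ := ∫ y in (ball p₀ 10)ᶜ, Real.log (‖y‖ / ‖p₀ - y‖) * f y with hIT1p
  set IT2 : ℝ := ∫ y in ball p₀ 10, Real.log ‖y‖ * f y with hIT2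
  set ρ : ℝ := Real.exp (-(Real.log (10/9) * βI + m) / cN n) *
      Real.exp (-(1 / cN n) * IT1p) * Real.exp (-(1 / cN n) * IT2) with hρ
  have hρpos : 0 < ρ := by positivity
  -- measurability of the potential and the exponential integrand
  have hlogPotMeas : Measurable (logPot n f) := by
    have hdef : logPot n f = fun z : EuclideanSpace ℝ (Fin n) =>
        (1 / cN n) * ∫ y, Real.log (‖y‖ / ‖z - y‖) * f y := rfl
    rw [hdef]
    exact ((logPot_core_sm hfc).measurable).const_mul _
  set gE : ℝ → ℝ≥0∞ := fun t =>
    ENNReal.ofReal (Real.exp (-(logPot n f (γ' t)))) with hgE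
  have hgEmeas : Measurable gE := by
    rw [hgE]
    apply Measurable.ennreal_ofReal
    exact Real.measurable_exp.comp ((hlogPotMeas.comp hγ'cont.measurable).neg)
  -- the key pointwise estimate on good s
  have hKey : ∀ s ∈ Icc (-1:ℝ) 1, W s < ENNReal.ofReal m →
      ENNReal.ofReal ρ ≤ gE (θ s) := by
    intro s hs hWs
    obtain ⟨hθI, hθh⟩ := hθmem s hs
    set z : EuclideanSpace ℝ (Fin n) := γ' (θ s) with hz
    have hzcb : z ∈ closedBall p₀ 1 := by
      rw [hz, hγ'eq _ hθI]
      exact hball _ hθI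
    have hlow : ∀ w : EuclideanSpace ℝ (Fin n),
        |s - (inner ℝ e (w - p₀) : ℝ)| ≤ ‖z - w‖ := by
      intro w
      have h2 : z - w = (z - p₀) - (w - p₀) := by abel
      have h1 : (inner ℝ e (z - w) : ℝ) = s - (inner ℝ e (w - p₀) : ℝ) := by
        rw [h2, inner_sub_right]
        have h3 : (inner ℝ e (z - p₀) : ℝ) = s := hθh
        rw [h3]
      calc |s - (inner ℝ e (w - p₀) : ℝ)| = |(inner ℝ e (z - w) : ℝ)| := by rw [h1]
        _ ≤ ‖e‖ * ‖z - w‖ := abs_real_inner_le_norm _ _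
        _ = ‖z - w‖ := by rw [he, one_mul]
    have haeneq : ∀ᵐ w ∂(volume.restrict (ball p₀ 10)),
        (inner ℝ e (w - p₀) : ℝ) ≠ s := by
      have hnull : volume {w : EuclideanSpace ℝ (Fin n) |
          (inner ℝ e (w - p₀) : ℝ) = s} = 0 := by
        have hseteq : {w : EuclideanSpace ℝ (Fin n) | (inner ℝ e (w - p₀) : ℝ) = s} =
            {w : EuclideanSpace ℝ (Fin n) |
              (inner ℝ e w : ℝ) = s + (inner ℝ e p₀ : ℝ)} := by
          ext w
          rw [mem_setOf_eq, mem_setOf_eq, inner_sub_right]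
          constructor <;> intro hh <;> linarith
        rw [hseteq]
        exact hyperplane_null e he _
      rw [Filter.eventually_iff, mem_ae_iff]
      have hcompl : {w : EuclideanSpace ℝ (Fin n) |
          (inner ℝ e (w - p₀) : ℝ) ≠ s}ᶜ =
          {w : EuclideanSpace ℝ (Fin n) | (inner ℝ e (w - p₀) : ℝ) = s} := by
        ext w; simp
      rw [hcompl]
      exact restrict_null hnull _
    have hIinv : IntegrableOn (fun w => Real.log (‖z - w‖⁻¹) * f w) (ball p₀ 10) := by
      have h1 := (int_log_sub (p₀ := p₀) hn hfi hint z).neg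
      apply h1.congr
      apply ae_of_all
      intro w
      simp only [Pi.neg_apply, Real.log_inv, neg_mul]
    have hT3 : (∫ w in ball p₀ 10, Real.log (‖z - w‖⁻¹) * f w) ≤ m := by
      have h1 : ENNReal.ofReal (∫ w in ball p₀ 10, Real.log (‖z - w‖⁻¹) * f w) ≤
          ∫⁻ w in ball p₀ 10, ENNReal.ofReal (Real.log (‖z - w‖⁻¹) * f w) :=
        ofReal_integral_le hIinv
      have h2 : (∫⁻ w in ball p₀ 10,
          ENNReal.ofReal (Real.log (‖z - w‖⁻¹) * f w)) ≤ W s := by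
        rw [hW]
        apply lintegral_mono_ae
        filter_upwards [haeneq] with w hw
        apply ENNReal.ofReal_le_ofReal
        apply mul_le_mul_of_nonneg_right _ (hf0 w)
        have habs : 0 < |s - (inner ℝ e (w - p₀) : ℝ)| := by
          rw [abs_pos, sub_ne_zero]
          exact fun hcon => hw hcon.symm
        have hnz : 0 < ‖z - w‖ := lt_of_lt_of_le habs (hlow w)
        exact Real.log_le_log (by positivity) (inv_anti₀ habs (hlow w))
      exact (ENNReal.ofReal_le_ofReal_iff hm.le).1 (h1.trans (h2.trans hWs.le))
    have hT3' : -m ≤ ∫ w in ball p₀ 10, Real.log ‖z - w‖ * f w := by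
      have heq : (∫ w in ball p₀ 10, Real.log ‖z - w‖ * f w) =
          -∫ w in ball p₀ 10, Real.log (‖z - w‖⁻¹) * f w := by
        rw [← integral_neg]
        apply integral_congr_ae
        apply ae_of_all
        intro w
        simp only [Real.log_inv, neg_mul, neg_neg]
      rw [heq]
      linarith
    rw [hgE]
    apply ENNReal.ofReal_le_ofReal
    rw [hρ, ← Real.exp_add, ← Real.exp_add, Real.exp_le_exp]
    have hsplit := pot_split (p₀ := p₀) hn hfi hint z
    have hlogPot : logPot n f z =
        (1 / cN n) * ∫ w, Real.log (‖w‖ / ‖z - w‖) * f w := rfl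
    have hzz : γ' (θ s) = z := rfl
    rw [hzz, hlogPot, hsplit]
    have hT1 := T1_upper (p₀ := p₀) hn hf0 hfi hint hzcb
    rw [← hβI] at hT1
    rw [← hIT1p] at hT1
    rw [← hIT2]
    exact arith_key1 hc hT1 hT3'
  -- finiteness via the uniform upper bound on the ball
  have hEub : ∀ t ∈ Icc (0:ℝ) L, -(logPot n f (γ' t)) ≤
      (1/cN n) * (Real.log 12 * βI) -
        (1/cN n) * (IT1p - Real.log (11/10) * βI) - (1/cN n) * IT2 := by
    intro t ht
    have hzcb : γ' t ∈ closedBall p₀ 1 := by rw [hγ'eq t ht]; exact hball t ht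
    have hsplit := pot_split (p₀ := p₀) hn hfi hint (γ' t)
    have hT1 := T1_lower (p₀ := p₀) hn hf0 hfi hint hzcb
    have hT3 := T3_upper (p₀ := p₀) hn hf0 hfi hint hzcb
      (int_log_sub (p₀ := p₀) hn hfi hint (γ' t))
    have hlogPot : logPot n f (γ' t) =
        (1 / cN n) * ∫ w, Real.log (‖w‖ / ‖γ' t - w‖) * f w := rfl
    rw [hlogPot, hsplit]
    rw [← hβI] at hT1 hT3
    rw [← hIT1p] at hT1
    rw [← hIT2]
    exact arith_key2 hc hT1 hT3
  have hfin : (∫⁻ t in Icc (0:ℝ) L, gE t) ≠ ⊤ := by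
    have hb : (∫⁻ t in Icc (0:ℝ) L, gE t) ≤
        ENNReal.ofReal (Real.exp ((1/cN n) * (Real.log 12 * βI) -
          (1/cN n) * (IT1p - Real.log (11/10) * βI) - (1/cN n) * IT2)) *
          volume (Icc (0:ℝ) L) := by
      rw [← setLIntegral_const]
      apply lintegral_mono_ae
      filter_upwards [ae_restrict_mem measurableSet_Icc] with t ht
      rw [hgE]
      exact ENNReal.ofReal_le_ofReal (Real.exp_le_exp.2 (hEub t ht))
    refine ne_top_of_le_ne_top ?_ hb
    exact ENNReal.mul_ne_top ENNReal.ofReal_ne_top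
      (by rw [Real.volume_Icc]; exact ENNReal.ofReal_ne_top)
  -- the main chain of inequalities
  have hchain : ENNReal.ofReal ρ ≤ ∫⁻ t in Icc (0:ℝ) L, gE t := by
    have hgoodmeas : MeasurableSet {s : ℝ | W s < ENNReal.ofReal m} :=
      measurableSet_lt hWmeas measurable_const
    calc ENNReal.ofReal ρ = ENNReal.ofReal ρ * 1 := (mul_one _).symm
      _ ≤ ENNReal.ofReal ρ * μ₁ {s : ℝ | W s < ENNReal.ofReal m} :=
          mul_le_mul_right hgood _
      _ = ∫⁻ s in {s : ℝ | W s < ENNReal.ofReal m}, ENNReal.ofReal ρ ∂μ₁ :=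
          (setLIntegral_const _ _).symm
      _ ≤ ∫⁻ s in {s : ℝ | W s < ENNReal.ofReal m}, gE (θ s) ∂μ₁ := by
          apply lintegral_mono_ae
          rw [hμ₁, Measure.restrict_restrict hgoodmeas]
          filter_upwards [ae_restrict_mem (hgoodmeas.inter measurableSet_Icc)]
            with s hsm
          exact hKey s hsm.2 hsm.1
      _ ≤ ∫⁻ s, gE (θ s) ∂μ₁ := setLIntegral_le_lintegral _ _
      _ = ∫⁻ t, gE t ∂(Measure.map θ μ₁) :=
          (lintegral_map hgEmeas hθmono.measurable).symm
      _ = ∫⁻ t in Icc (0:ℝ) L, gE t ∂(Measure.map θ μ₁) := by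
          rw [← lintegral_add_compl gE
            (measurableSet_Icc (a := (0:ℝ)) (b := L)) (μ := Measure.map θ μ₁)]
          have hz : (Measure.map θ μ₁) (Icc (0:ℝ) L)ᶜ = 0 := by
            rw [Measure.map_apply hθmono.measurable measurableSet_Icc.compl]
            have hempty : θ ⁻¹' (Icc (0:ℝ) L)ᶜ = ∅ := by
              ext s
              simp only [mem_preimage, mem_compl_iff, mem_empty_iff_false,
                iff_false, not_not]
              exact hθall s
            rw [hempty]
            exact measure_empty
          rw [setLIntegral_measure_zero _ _ hz, add_zero]
      _ ≤ ∫⁻ t in Icc (0:ℝ) L, gE t ∂volume := by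
          apply lintegral_mono'
          · rw [hμ₁]
            exact Measure.restrict_mono subset_rfl
              (map_expanding_le_volume hθmono hθexp)
          · exact le_rfl
  -- wrap up: convert back to the interval integral
  have haesm : AEStronglyMeasurable (fun t => Real.exp (-(logPot n f (γ t))))
      (volume.restrict (Ioc 0 L)) := by
    apply AEStronglyMeasurable.congr
      (f := fun t => Real.exp (-(logPot n f (γ' t))))
    · exact ((Real.measurable_exp.comp
        ((hlogPotMeas.comp hγ'cont.measurable).neg)).stronglyMeasurable).aestronglyMeasurable
    · filter_upwards [ae_restrict_mem measurableSet_Ioc] with t ht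
      rw [hγ'eq t (Ioc_subset_Icc_self ht)]
  rw [intervalIntegral.integral_of_le hL]
  rw [MeasureTheory.integral_eq_lintegral_of_nonneg_ae
    (ae_of_all _ fun t => (Real.exp_pos _).le) haesm]
  have hlcongr : (∫⁻ t in Ioc (0:ℝ) L,
      ENNReal.ofReal (Real.exp (-(logPot n f (γ t))))) =
      ∫⁻ t in Icc (0:ℝ) L, gE t := by
    rw [Measure.restrict_congr_set Ioc_ae_eq_Icc]
    apply setLIntegral_congr_fun measurableSet_Icc
    intro t ht
    rw [hgE]
    simp only
    rw [hγ'eq t ht]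
  rw [hlcongr]
  calc Real.exp (-(Real.log (10/9) * βI + m) / cN n) *
      Real.exp (-(1 / cN n) * IT1p) * Real.exp (-(1 / cN n) * IT2) = ρ := by rw [hρ]
    _ = (ENNReal.ofReal ρ).toReal := (ENNReal.toReal_ofReal hρpos.le).symm
    _ ≤ (∫⁻ t in Icc (0:ℝ) L, gE t).toReal := ENNReal.toReal_mono hfin hchain
end
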